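/- arXiv:1401.3173 — 2 statements merged into one kernel-verified Lean document; each statement's English description precedes it below -/
import Mathlib

section
/- Let D₁ be a deterministic finite automaton over the alphabet α × β₁ with finite state type Q₁ and D₂ a deterministic finite automaton over the alphabet α × β₂ with finite state type Q₂. Then there exists a deterministic finite automaton D over the alphabet α × (β₁ × β₂) with state type Q₁ × Q₂ such that π(D.accepts) = π(D₁.accepts) ∩ π(D₂.accepts). -/
/-- The projection of a language over a product alphabet `α × β` onto `α`,
obtained by mapping each letter of each word to its first component. -/
def projLang {α β : Type} (L : Language (α × β)) : Set (List α) :=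
  (fun w : List (α × β) => w.map Prod.fst) '' L

private lemma zip_words {α β₁ β₂ : Type} :
    ∀ (u : List (α × β₁)) (v : List (α × β₂)),
      u.map Prod.fst = v.map Prod.fst →
      ∃ w : List (α × (β₁ × β₂)),
        w.map (fun x => (x.1, x.2.1)) = u ∧ w.map (fun x => (x.1, x.2.2)) = v
  | [], [], _ => ⟨[], rfl, rfl⟩
  | [], (x :: v), h => by simp at h
  | (x :: u), [], h => by simp at h
  | ((a, b₁) :: u), ((a', b₂) :: v), h => by
      simp only [List.map_cons, List.cons.injEq] at h
      obtain ⟨rfl, h⟩ := h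
      obtain ⟨w, hw1, hw2⟩ := zip_words u v h
      exact ⟨(a, (b₁, b₂)) :: w, by simp [hw1], by simp [hw2]⟩

/-- Product construction for conjunction: given DFAs `D₁` over `α × β₁` and `D₂` over
`α × β₂` with finite state types `Q₁` and `Q₂`, there is a DFA `D` over `α × (β₁ × β₂)`
with state type `Q₁ × Q₂` such that `π(D.accepts) = π(D₁.accepts) ∩ π(D₂.accepts)`. -/
theorem dfa_conjunction_free_inputs {α β₁ β₂ Q₁ Q₂ : Type} [Fintype Q₁] [Fintype Q₂]
    (D₁ : DFA (α × β₁) Q₁) (D₂ : DFA (α × β₂) Q₂) :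
    ∃ D : DFA (α × (β₁ × β₂)) (Q₁ × Q₂),
      projLang D.accepts = projLang D₁.accepts ∩ projLang D₂.accepts := by
  set D : DFA (α × (β₁ × β₂)) (Q₁ × Q₂) :=
    { step := fun q x => (D₁.step q.1 (x.1, x.2.1), D₂.step q.2 (x.1, x.2.2))
      start := (D₁.start, D₂.start)
      accept := {q | q.1 ∈ D₁.accept ∧ q.2 ∈ D₂.accept} } with hD
  have key : ∀ (w : List (α × (β₁ × β₂))) (p : Q₁) (q : Q₂),
      D.evalFrom (p, q) w =
        (D₁.evalFrom p (w.map (fun x => (x.1, x.2.1))),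
         D₂.evalFrom q (w.map (fun x => (x.1, x.2.2)))) := by
    intro w
    induction w with
    | nil => intro p q; rfl
    | cons x w ih => intro p q; simp [DFA.evalFrom, List.foldl_cons] at ih ⊢; exact ih _ _
  refine ⟨D, Set.ext fun s => ?_⟩
  constructor
  · rintro ⟨w, hw, rfl⟩
    have hw' : D.evalFrom D.start w ∈ D.accept := hw
    rw [show D.start = (D₁.start, D₂.start) from rfl, key] at hw'
    obtain ⟨h1, h2⟩ := hw'
    exact ⟨⟨w.map (fun x => (x.1, x.2.1)), by exact (D₁.mem_accepts).2 h1, by simp⟩,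
           ⟨w.map (fun x => (x.1, x.2.2)), by exact (D₂.mem_accepts).2 h2, by simp⟩⟩
  · rintro ⟨⟨u, hu, hus⟩, ⟨v, hv, hvs⟩⟩
    obtain ⟨w, hw1, hw2⟩ := zip_words u v (hus.trans hvs.symm)
    have hacc : w ∈ D.accepts := by
      refine (D.mem_accepts).2 ?_
      show D.evalFrom D.start w ∈ D.accept
      rw [show D.start = (D₁.start, D₂.start) from rfl, key, hw1, hw2]
      exact ⟨(D₁.mem_accepts).1 hu, (D₂.mem_accepts).1 hv⟩
    refine ⟨w, hacc, ?_⟩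
    simp only [← hus, ← hw1, List.map_map]
    rfl
end

section
/- Let β₁ and β₂ be nonempty types, let D₁ be a deterministic finite automaton over the alphabet α × β₁ with finite state type Q₁, and let D₂ be a deterministic finite automaton over the alphabet α × β₂ with finite state type Q₂. Then there exists a deterministic finite automaton D over the alphabet α × (β₁ × β₂) with state type Q₁ × Q₂ such that π(D.accepts) = π(D₁.accepts) ∪ π(D₂.accepts). -/
/-- Product construction for disjunction: given nonempty types `β₁`, `β₂` and DFAs `D₁`
over `α × β₁` and `D₂` over `α × β₂` with finite state types `Q₁` and `Q₂`, there is a DFA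
`D` over `α × (β₁ × β₂)` with state type `Q₁ × Q₂` such that
`π(D.accepts) = π(D₁.accepts) ∪ π(D₂.accepts)`. -/
theorem dfa_disjunction_free_inputs {α β₁ β₂ Q₁ Q₂ : Type} [Nonempty β₁] [Nonempty β₂]
    [Fintype Q₁] [Fintype Q₂] (D₁ : DFA (α × β₁) Q₁) (D₂ : DFA (α × β₂) Q₂) :
    ∃ D : DFA (α × (β₁ × β₂)) (Q₁ × Q₂),
      projLang D.accepts = projLang D₁.accepts ∪ projLang D₂.accepts := by
  classical
  refine ⟨{ step := fun q c => (D₁.step q.1 (c.1, c.2.1), D₂.step q.2 (c.1, c.2.2)),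
            start := (D₁.start, D₂.start),
            accept := {q | q.1 ∈ D₁.accept ∨ q.2 ∈ D₂.accept} }, ?_⟩
  set D : DFA (α × (β₁ × β₂)) (Q₁ × Q₂) :=
    { step := fun q c => (D₁.step q.1 (c.1, c.2.1), D₂.step q.2 (c.1, c.2.2)),
      start := (D₁.start, D₂.start),
      accept := {q | q.1 ∈ D₁.accept ∨ q.2 ∈ D₂.accept} } with hD
  have h1 : ∀ (w : List (α × (β₁ × β₂))) (q : Q₁ × Q₂),
      (D.evalFrom q w).1 = D₁.evalFrom q.1 (w.map fun c => (c.1, c.2.1)) := by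
    intro w
    induction w with
    | nil => intro q; rfl
    | cons c w ih =>
      intro q
      simp only [DFA.evalFrom, List.map_cons, List.foldl_cons] at *
      exact ih _
  have h2 : ∀ (w : List (α × (β₁ × β₂))) (q : Q₁ × Q₂),
      (D.evalFrom q w).2 = D₂.evalFrom q.2 (w.map fun c => (c.1, c.2.2)) := by
    intro w
    induction w with
    | nil => intro q; rfl
    | cons c w ih =>
      intro q
      simp only [DFA.evalFrom, List.map_cons, List.foldl_cons] at *
      exact ih _
  ext x
  constructor
  · rintro ⟨w, hw, rfl⟩
    have hw' : (D.eval w).1 ∈ D₁.accept ∨ (D.eval w).2 ∈ D₂.accept := hw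
    rcases hw' with h | h
    · left
      refine ⟨w.map fun c => (c.1, c.2.1), ?_, by simp⟩
      rw [DFA.eval] at h
      rw [h1 w D.start] at h
      exact h
    · right
      refine ⟨w.map fun c => (c.1, c.2.2), ?_, by simp⟩
      rw [DFA.eval] at h
      rw [h2 w D.start] at h
      exact h
  · rintro (⟨w, hw, rfl⟩ | ⟨w, hw, rfl⟩)
    · obtain ⟨b⟩ := ‹Nonempty β₂›
      refine ⟨w.map fun c => (c.1, (c.2, b)), ?_, by simp⟩
      show (D.eval _).1 ∈ D₁.accept ∨ _
      left
      rw [DFA.eval, h1]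
      have hm : ∀ u : List (α × β₁),
          List.map (fun c => (c.1, c.2.1)) (List.map (fun c => (c.1, (c.2, b))) u) = u := by
        intro u
        induction u with
        | nil => rfl
        | cons a t ih => simp [ih]
      rw [hm]; exact hw
    · obtain ⟨b⟩ := ‹Nonempty β₁›
      refine ⟨w.map fun c => (c.1, (b, c.2)), ?_, by simp⟩
      show _ ∨ (D.eval _).2 ∈ D₂.accept
      right
      rw [DFA.eval, h2]
      have hm : ∀ u : List (α × β₂),
          List.map (fun c => (c.1, c.2.2)) (List.map (fun c => (c.1, (b, c.2))) u) = u := by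
        intro u
        induction u with
        | nil => rfl
        | cons a t ih => simp [ih]
      rw [hm]; exact hw
end
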